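/- Let (V, S) be a spanning tree of a graph on V, s ≠ t in V, T := {v : deg_S(v) odd} △ {s} △ {t}, and let δ(U) be an s-t-cut (s ∈ U, t ∉ U) with |S ∩ δ(U)| = 1. Then |U ∩ T| is even. -/

import Mathlib

open Finset
open scoped symmDiff

open scoped Classical in
/-- The set of edges `δ(U)` of the complete graph on `V` with exactly one endpoint in `U`. -/
noncomputable def cutEdges {V : Type*} [Fintype V] (U : Finset V) : Finset (Sym2 V) :=
  Finset.univ.filter (fun e => ∃ v w : V, e = s(v, w) ∧ v ∈ U ∧ w ∉ U)

open scoped Classical in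
/-- The degree of `v` in the edge set `S`. -/
noncomputable def degS {V : Type*} (S : Finset (Sym2 V)) (v : V) : ℕ :=
  (S.filter (fun e => v ∈ e)).card

open scoped Classical in
/-- Parity correction set `T = {v : deg_S(v) odd} △ {s} △ {t}`. -/
noncomputable def wrongParity {V : Type*} [Fintype V] (S : Finset (Sym2 V)) (s t : V) :
    Finset V :=
  (Finset.univ.filter (fun v => Odd (degS S v))) ∆ {s} ∆ {t}

open scoped Classical in
lemma zmod_card_filter_edge {V : Type*} [Fintype V] [DecidableEq V]
    (U : Finset V) (e : Sym2 V) (he : ¬ e.IsDiag) :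
    (((U.filter (fun v => v ∈ e)).card : ℕ) : ZMod 2) =
      if e ∈ cutEdges U then 1 else 0 := by
  induction e with
  | _ a b =>
    rw [Sym2.mk_isDiag_iff] at he
    have hcut : (s(a,b) ∈ cutEdges U) ↔ ((a ∈ U ∧ b ∉ U) ∨ (b ∈ U ∧ a ∉ U)) := by
      simp only [cutEdges, Finset.mem_filter, Finset.mem_univ, true_and]
      constructor
      · rintro ⟨v, w, hvw, hv, hw⟩
        rw [Sym2.eq_iff] at hvw
        rcases hvw with ⟨rfl, rfl⟩ | ⟨rfl, rfl⟩
        · exact Or.inl ⟨hv, hw⟩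
        · exact Or.inr ⟨hv, hw⟩
      · rintro (⟨h1, h2⟩ | ⟨h1, h2⟩)
        · exact ⟨a, b, rfl, h1, h2⟩
        · exact ⟨b, a, Sym2.eq_swap, h1, h2⟩
    by_cases ha : a ∈ U <;> by_cases hb : b ∈ U
    · have hf : U.filter (fun v => v ∈ s(a,b)) = {a, b} := by
        ext v
        simp only [Finset.mem_filter, Sym2.mem_iff, Finset.mem_insert, Finset.mem_singleton]
        constructor
        · exact fun h => h.2
        · rintro (rfl | rfl) <;> exact ⟨by assumption, by tauto⟩
      rw [hf, Finset.card_pair he, if_neg (by simp [hcut, ha, hb])]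
      decide
    · have hf : U.filter (fun v => v ∈ s(a,b)) = {a} := by
        ext v
        simp only [Finset.mem_filter, Sym2.mem_iff, Finset.mem_singleton]
        constructor
        · rintro ⟨hv, rfl | rfl⟩
          · rfl
          · exact absurd hv hb
        · rintro rfl
          exact ⟨ha, Or.inl rfl⟩
      rw [hf]
      simp [hcut, ha, hb]
    · have hf : U.filter (fun v => v ∈ s(a,b)) = {b} := by
        ext v
        simp only [Finset.mem_filter, Sym2.mem_iff, Finset.mem_singleton]
        constructor
        · rintro ⟨hv, rfl | rfl⟩
          · exact absurd hv ha
          · rfl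
        · rintro rfl
          exact ⟨hb, Or.inr rfl⟩
      rw [hf]
      simp [hcut, ha, hb]
    · have hf : U.filter (fun v => v ∈ s(a,b)) = ∅ := by
        ext v
        simp only [Finset.mem_filter, Sym2.mem_iff, Finset.notMem_empty, iff_false]
        rintro ⟨hv, rfl | rfl⟩ <;> tauto
      rw [hf]
      simp [hcut, ha, hb]

/-- A lonely cut (an `s`-`t`-cut crossed exactly once by the spanning tree `S`) is not a
`T`-cut: `|U ∩ T|` is even. -/
theorem stmt_6 {V : Type*} [Fintype V] [DecidableEq V] (s t : V) (hst : s ≠ t)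
    (S : Finset (Sym2 V)) (hdiag : ∀ e ∈ S, ¬ e.IsDiag)
    (htree : (SimpleGraph.fromEdgeSet (S : Set (Sym2 V))).IsTree)
    (U : Finset V) (hsU : s ∈ U) (htU : t ∉ U)
    (hlonely : (S ∩ cutEdges U).card = 1) :
    Even ((U ∩ wrongParity S s t).card) := by
  classical
  set A := Finset.univ.filter (fun v => Odd (degS S v)) with hA
  -- key parity identity
  have key : (((U ∩ A).card : ℕ) : ZMod 2) = 1 := by
    have h1 : (((U ∩ A).card : ℕ) : ZMod 2) = ∑ v ∈ U, ((degS S v : ℕ) : ZMod 2) := by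
      have hUA : U ∩ A = U.filter (fun v => Odd (degS S v)) := by
        ext v; simp [hA]
      rw [hUA, Finset.card_filter]
      push_cast
      refine Finset.sum_congr rfl fun v _ => ?_
      by_cases h : Odd (degS S v)
      · simp [h, ZMod.natCast_eq_one_iff_odd.2 h]
      · simp [h, ZMod.natCast_eq_zero_iff_even.2 (Nat.not_odd_iff_even.1 h)]
    have h2 : ∑ v ∈ U, ((degS S v : ℕ) : ZMod 2)
        = ∑ e ∈ S, (((U.filter (fun v => v ∈ e)).card : ℕ) : ZMod 2) := by
      have hdeg : ∀ v, ((degS S v : ℕ) : ZMod 2)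
          = ∑ e ∈ S, if v ∈ e then (1 : ZMod 2) else 0 := by
        intro v
        rw [degS, Finset.card_filter]
        push_cast
        simp
      have hcard : ∀ e : Sym2 V, (((U.filter (fun v => v ∈ e)).card : ℕ) : ZMod 2)
          = ∑ v ∈ U, if v ∈ e then (1 : ZMod 2) else 0 := by
        intro e
        rw [Finset.card_filter]
        push_cast
        simp
      simp_rw [hdeg, hcard]
      exact Finset.sum_comm
    have h3 : ∑ e ∈ S, (((U.filter (fun v => v ∈ e)).card : ℕ) : ZMod 2)
        = ∑ e ∈ S, if e ∈ cutEdges U then (1 : ZMod 2) else 0 := by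
      refine Finset.sum_congr rfl fun e he => ?_
      exact zmod_card_filter_edge U e (hdiag e he)
    have h4 : ∑ e ∈ S, (if e ∈ cutEdges U then (1 : ZMod 2) else 0)
        = (((S ∩ cutEdges U).card : ℕ) : ZMod 2) := by
      have : S ∩ cutEdges U = S.filter (fun e => e ∈ cutEdges U) := by
        ext e; simp
      rw [this, Finset.card_filter]
      push_cast
      simp
    rw [h1, h2, h3, h4, hlonely]
    norm_num
  have hodd : Odd ((U ∩ A).card) := ZMod.natCast_eq_one_iff_odd.1 key
  -- describe U ∩ T
  have hUT : U ∩ wrongParity S s t = (U ∩ A) ∆ {s} := by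
    ext v
    by_cases hvs : v = s <;> by_cases hvt : v = t
    · exact absurd (hvs ▸ hvt.symm ▸ rfl : s = t) hst
    · subst hvs
      simp [wrongParity, Finset.mem_symmDiff, hA, hsU, hst, Ne.symm hst]
    · subst hvt
      simp [wrongParity, Finset.mem_symmDiff, hA, htU, hst, Ne.symm hst]
    · simp [wrongParity, Finset.mem_symmDiff, hA, hvs, hvt]
  rw [hUT]
  by_cases hs : s ∈ U ∩ A
  · have : (U ∩ A) ∆ {s} = (U ∩ A).erase s := by
      ext v
      by_cases hvs : v = s <;>
        simp [Finset.mem_symmDiff, hvs, hs]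
    rw [this, Finset.card_erase_of_mem hs]
    exact Nat.Odd.sub_odd hodd odd_one
  · have : (U ∩ A) ∆ {s} = insert s (U ∩ A) := by
      ext v
      by_cases hvs : v = s <;>
        simp [Finset.mem_symmDiff, hvs, hs]
    rw [this, Finset.card_insert_of_notMem hs]
    exact Odd.add_one hodd
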